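/- Let x⁽¹⁾, …, x⁽ᴸ⁾ ∈ {0,1}^n and let τ = min over y ∈ [0,1]^n of max_i (1/n)∑_j |x⁽ⁱ⁾_j − y_j|. Then there exists a binary point y ∈ {0,1}^n such that (1/n)∑_j |x⁽ⁱ⁾_j − y_j| ≤ τ + L/(2n) for all i = 1, …, L. -/

import Mathlib

open Finset

lemma abs_bin (a z : ℝ) (ha : a = 0 ∨ a = 1) (h0 : 0 ≤ z) (h1 : z ≤ 1) :
    |a - z| = a + (1 - 2*a) * z := by
  rcases ha with h|h <;> subst h
  · rw [zero_sub, abs_neg, abs_of_nonneg h0]; ring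
  · rw [abs_of_nonneg (by linarith)]; ring

lemma step_lemma (n L : ℕ) (x : Fin L → Fin n → ℝ)
    (hx : ∀ i j, x i j = 0 ∨ x i j = 1)
    (z : Fin n → ℝ) (hz : ∀ j, 0 ≤ z j ∧ z j ≤ 1)
    (hcard : L < (univ.filter fun j => z j ≠ 0 ∧ z j ≠ 1).card) :
    ∃ w : Fin n → ℝ, (∀ j, 0 ≤ w j ∧ w j ≤ 1) ∧
      (univ.filter fun j => w j ≠ 0 ∧ w j ≠ 1).card
        < (univ.filter fun j => z j ≠ 0 ∧ z j ≠ 1).card ∧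
      ∀ i, ∑ j, |x i j - w j| = ∑ j, |x i j - z j| := by
  set F : Finset (Fin n) := univ.filter fun j => z j ≠ 0 ∧ z j ≠ 1 with hF
  obtain ⟨F', hF'sub, hF'card⟩ := Finset.exists_subset_card_eq (show L + 1 ≤ F.card from hcard)
  set e : Fin (L+1) → Fin n := fun k => (F'.orderIsoOfFin hF'card k : Fin n) with he
  have he_inj : Function.Injective e := fun a b h => (F'.orderIsoOfFin hF'card).injective (Subtype.ext h)
  have he_mem : ∀ k, e k ∈ F' := fun k => (F'.orderIsoOfFin hF'card k).2
  set σ : Fin L → Fin n → ℝ := fun i j => 1 - 2 * x i j with hσ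
  set M : Matrix (Fin L) (Fin (L+1)) ℝ := fun i k => σ i (e k) with hM
  have hninj : ¬ Function.Injective M.mulVecLin := by
    intro h
    have := LinearMap.finrank_le_finrank_of_injective h
    simp [Module.finrank_pi] at this
  rw [← LinearMap.ker_eq_bot] at hninj
  obtain ⟨v, hvker, hvne⟩ := (Submodule.ne_bot_iff _).mp hninj
  have hv : M.mulVec v = 0 := hvker
  set u : Fin n → ℝ := fun j => ∑ k, if e k = j then v k else 0 with hu
  have hu_e : ∀ k, u (e k) = v k := by
    intro k
    simp only [hu]
    rw [Finset.sum_eq_single k]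
    · simp
    · intro k' _ hk'; rw [if_neg (fun h => hk' (he_inj h))]
    · simp
  have hu_zero : ∀ j, j ∉ F' → u j = 0 := by
    intro j hj
    simp only [hu]
    apply Finset.sum_eq_zero
    intro k _
    have : e k ≠ j := fun h => hj (h ▸ he_mem k)
    simp [this]
  have hsum : ∀ i, ∑ j, σ i j * u j = 0 := by
    intro i
    have : ∑ j, σ i j * u j = ∑ k, σ i (e k) * v k := by
      simp only [hu]
      simp_rw [Finset.mul_sum, mul_ite, mul_zero]
      rw [Finset.sum_comm]
      apply Finset.sum_congr rfl
      intro k _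
      rw [Finset.sum_ite_eq]
      simp
    rw [this]
    have := congrFun hv i
    simpa [Matrix.mulVec, dotProduct, hM] using this
  -- support facts
  have hsupp : ∀ j, u j ≠ 0 → j ∈ F := fun j h => hF'sub (by
    by_contra hj; exact h (hu_zero j hj))
  have hfrac : ∀ j, j ∈ F → 0 < z j ∧ z j < 1 := by
    intro j hj
    rw [hF, Finset.mem_filter] at hj
    exact ⟨lt_of_le_of_ne (hz j).1 (Ne.symm hj.2.1), lt_of_le_of_ne (hz j).2 hj.2.2⟩
  set S : Finset (Fin n) := univ.filter fun j => u j ≠ 0 with hS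
  have hSne : S.Nonempty := by
    obtain ⟨k, hk⟩ := Function.ne_iff.mp hvne
    refine ⟨e k, Finset.mem_filter.mpr ⟨Finset.mem_univ _, ?_⟩⟩
    rw [hu_e]; simpa using hk
  set g : Fin n → ℝ := fun j => if 0 < u j then (1 - z j) / u j else z j / (-u j) with hg
  have hgpos : ∀ j ∈ S, 0 < g j := by
    intro j hj
    rw [hS, Finset.mem_filter] at hj
    have hfr := hfrac j (hsupp j hj.2)
    simp only [hg]
    rcases lt_or_gt_of_ne hj.2 with h|h
    · rw [if_neg (by linarith)]; exact div_pos hfr.1 (by linarith)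
    · rw [if_pos h]; apply div_pos (by linarith) h
  obtain ⟨j₀, hj₀S, hj₀min⟩ := S.exists_min_image g hSne
  set t : ℝ := g j₀ with ht
  have htpos : 0 < t := hgpos j₀ hj₀S
  set w : Fin n → ℝ := fun j => z j + t * u j with hw
  have huj₀ : u j₀ ≠ 0 := (Finset.mem_filter.mp hj₀S).2
  have hbox : ∀ j, 0 ≤ w j ∧ w j ≤ 1 := by
    intro j
    simp only [hw]
    rcases lt_trichotomy (u j) 0 with h|h|h
    · have hjS : j ∈ S := Finset.mem_filter.mpr ⟨Finset.mem_univ j, ne_of_lt h⟩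
      have hle : t ≤ g j := hj₀min j hjS
      simp only [hg] at hle
      rw [if_neg (by linarith)] at hle
      have : t * (-u j) ≤ z j := (le_div_iff₀ (by linarith)).mp hle
      constructor
      · nlinarith
      · have : t * u j < 0 := mul_neg_of_pos_of_neg htpos h
        have := (hz j).2; linarith
    · simp [h, hz j]
    · have hjS : j ∈ S := Finset.mem_filter.mpr ⟨Finset.mem_univ j, ne_of_gt h⟩
      have hle : t ≤ g j := hj₀min j hjS
      simp only [hg] at hle; rw [if_pos h] at hle
      have h2 : t * u j ≤ 1 - z j := (le_div_iff₀ h).mp hle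
      have : 0 < t * u j := mul_pos htpos h
      have := (hz j).1
      exact ⟨by linarith, by linarith⟩
  have hwj₀ : w j₀ = 0 ∨ w j₀ = 1 := by
    simp only [hw, ht, hg]
    rcases lt_or_gt_of_ne huj₀ with h|h
    · left
      rw [if_neg (by linarith)]
      have hne : -u j₀ ≠ 0 := by linarith
      field_simp
      ring
    · right
      rw [if_pos h]
      have hne : u j₀ ≠ 0 := ne_of_gt h
      field_simp
      ring
  refine ⟨w, hbox, ?_, ?_⟩
  · apply lt_of_le_of_lt (Finset.card_le_card ?_) (Finset.card_erase_lt_of_mem (hsupp j₀ huj₀))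
    intro j hj
    rw [Finset.mem_filter] at hj
    rw [Finset.mem_erase]
    constructor
    · rintro rfl
      rcases hwj₀ with h|h
      · exact hj.2.1 h
      · exact hj.2.2 h
    · by_cases hu0 : u j = 0
      · have hzw : z j = w j := by simp only [hw]; simp [hu0]
        rw [hF, Finset.mem_filter]
        exact ⟨Finset.mem_univ j, by rw [hzw]; exact hj.2.1, by rw [hzw]; exact hj.2.2⟩
      · exact hsupp j hu0
  · intro i
    have key : ∀ ζ : Fin n → ℝ, (∀ j, 0 ≤ ζ j ∧ ζ j ≤ 1) →
        ∑ j, |x i j - ζ j| = ∑ j, (x i j + σ i j * ζ j) := by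
      intro ζ hζ
      apply Finset.sum_congr rfl
      intro j _
      rw [abs_bin _ _ (hx i j) (hζ j).1 (hζ j).2, hσ]
    rw [key w hbox, key z hz]
    have : ∑ j, (x i j + σ i j * w j) = ∑ j, (x i j + σ i j * z j) + t * ∑ j, σ i j * u j := by
      rw [Finset.mul_sum, ← Finset.sum_add_distrib]
      apply Finset.sum_congr rfl
      intro j _
      simp only [hw]; ring
    rw [this, hsum i, mul_zero, add_zero]

lemma reduceA (n L : ℕ) (x : Fin L → Fin n → ℝ)
    (hx : ∀ i j, x i j = 0 ∨ x i j = 1) :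
    ∀ (m : ℕ) (z : Fin n → ℝ), (∀ j, 0 ≤ z j ∧ z j ≤ 1) →
      (univ.filter fun j => z j ≠ 0 ∧ z j ≠ 1).card ≤ m →
      ∃ w : Fin n → ℝ, (∀ j, 0 ≤ w j ∧ w j ≤ 1) ∧
        (univ.filter fun j => w j ≠ 0 ∧ w j ≠ 1).card ≤ L ∧
        ∀ i, ∑ j, |x i j - w j| = ∑ j, |x i j - z j| := by
  intro m
  induction m with
  | zero =>
    intro z hz hc
    exact ⟨z, hz, by omega, fun i => rfl⟩
  | succ m ih =>
    intro z hz hc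
    by_cases hcL : (univ.filter fun j => z j ≠ 0 ∧ z j ≠ 1).card ≤ L
    · exact ⟨z, hz, hcL, fun i => rfl⟩
    · obtain ⟨w', hw'box, hw'card, hw'eq⟩ := step_lemma n L x hx z hz (by omega)
      obtain ⟨w, hwbox, hwcard, hweq⟩ := ih w' hw'box (by omega)
      exact ⟨w, hwbox, hwcard, fun i => (hweq i).trans (hw'eq i)⟩

lemma roundB (n L : ℕ) (x : Fin L → Fin n → ℝ)
    (hx : ∀ i j, x i j = 0 ∨ x i j = 1)
    (z : Fin n → ℝ) (hz : ∀ j, 0 ≤ z j ∧ z j ≤ 1)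
    (hcard : (univ.filter fun j => z j ≠ 0 ∧ z j ≠ 1).card ≤ L) :
    ∃ b : Fin n → Bool, ∀ i,
      ∑ j, |x i j - (if b j then (1:ℝ) else 0)| ≤ ∑ j, |x i j - z j| + L / 2 := by
  refine ⟨fun j => if (1:ℝ)/2 ≤ z j then true else false, ?_⟩
  intro i
  set F : Finset (Fin n) := univ.filter fun j => z j ≠ 0 ∧ z j ≠ 1 with hF
  have key : ∀ j, |x i j - (if (if (1:ℝ)/2 ≤ z j then true else false) then (1:ℝ) else 0)| ≤
      |x i j - z j| + (if j ∈ F then (1:ℝ)/2 else 0) := by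
    intro j
    by_cases hjF : j ∈ F
    · rw [if_pos hjF]
      have h1 : |x i j - (if (if (1:ℝ)/2 ≤ z j then true else false) then (1:ℝ) else 0)| ≤
          |x i j - z j| + |z j - (if (if (1:ℝ)/2 ≤ z j then true else false) then (1:ℝ) else 0)| :=
        abs_sub_le _ _ _
      refine h1.trans (add_le_add_right ?_ _)
      by_cases h : (1:ℝ)/2 ≤ z j
      · rw [if_pos h, show (if (true:Bool) then (1:ℝ) else 0) = 1 from rfl,
          abs_of_nonpos (by linarith [(hz j).2])]
        linarith
      · rw [if_neg h, show (if (false:Bool) then (1:ℝ) else 0) = 0 from rfl, sub_zero,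
          abs_of_nonneg (hz j).1]
        linarith
    · rw [if_neg hjF, add_zero]
      have : z j = 0 ∨ z j = 1 := by
        rw [hF] at hjF
        simp only [Finset.mem_filter, Finset.mem_univ, true_and, not_and_or, not_not] at hjF
        exact hjF
      rcases this with h|h
      · rw [h, if_neg (by norm_num)]
      · rw [h, if_pos (by norm_num)]
  calc ∑ j, |x i j - (if (if (1:ℝ)/2 ≤ z j then true else false) then (1:ℝ) else 0)|
      ≤ ∑ j, (|x i j - z j| + (if j ∈ F then (1:ℝ)/2 else 0)) :=
        Finset.sum_le_sum fun j _ => key j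
    _ = ∑ j, |x i j - z j| + ∑ j, (if j ∈ F then (1:ℝ)/2 else 0) := Finset.sum_add_distrib
    _ ≤ ∑ j, |x i j - z j| + L / 2 := by
        apply add_le_add_right
        rw [Finset.sum_ite_mem, Finset.univ_inter, Finset.sum_const, nsmul_eq_mul]
        have : (F.card : ℝ) ≤ L := by exact_mod_cast hcard
        linarith

/-- rounding the relaxed center of an `L`-tuple of binary words to a
binary point increases each normalized distance by at most `L/(2n)`. -/
theorem stmt_2 (n L : ℕ) (hn : 0 < n) (hL : 0 < L) (x : Fin L → Fin n → ℝ)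
    (hx : ∀ i j, x i j = 0 ∨ x i j = 1) :
    ∃ y : Fin n → ℝ, (∀ j, y j = 0 ∨ y j = 1) ∧
      ∀ i, (1 / n : ℝ) * ∑ j, |x i j - y j| ≤
        (⨅ y' : {y' : Fin n → ℝ // ∀ j, 0 ≤ y' j ∧ y' j ≤ 1},
            ⨆ i, (1 / n : ℝ) * ∑ j, |x i j - y'.1 j|) + L / (2 * n) := by
  by_contra hcon
  push_neg at hcon
  haveI : Nonempty (Fin L) := ⟨⟨0, hL⟩⟩
  haveI hne : Nonempty {y' : Fin n → ℝ // ∀ j, 0 ≤ y' j ∧ y' j ≤ 1} :=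
    ⟨⟨fun _ => 0, fun _ => ⟨le_refl 0, zero_le_one⟩⟩⟩
  set τ : ℝ := ⨅ y' : {y' : Fin n → ℝ // ∀ j, 0 ≤ y' j ∧ y' j ≤ 1},
      ⨆ i, (1 / n : ℝ) * ∑ j, |x i j - y'.1 j| with hτ
  set c : ℝ := (L : ℝ) / (2 * n) with hc
  set G : (Fin n → Bool) → ℝ := fun b =>
    univ.sup' univ_nonempty (fun i => (1 / n : ℝ) * ∑ j, |x i j - (if b j then (1:ℝ) else 0)|)
    with hG
  have hGb : ∀ b, τ + c < G b := by
    intro b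
    obtain ⟨i, hi⟩ := hcon (fun j => if b j then (1:ℝ) else 0)
      (fun j => by by_cases h : b j <;> simp [h])
    exact lt_of_lt_of_le hi (Finset.le_sup'
      (fun i => (1 / n : ℝ) * ∑ j, |x i j - (if b j then (1:ℝ) else 0)|) (mem_univ i))
  obtain ⟨b₀, _, hb₀⟩ := Finset.exists_min_image univ G univ_nonempty
  set ε : ℝ := (G b₀ - (τ + c)) / 2 with hε
  have hεpos : 0 < ε := by have := hGb b₀; rw [hε]; linarith
  have hτlt : τ < τ + ε := by linarith
  obtain ⟨y', hy'⟩ := exists_lt_of_ciInf_lt (show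
    (⨅ y' : {y' : Fin n → ℝ // ∀ j, 0 ≤ y' j ∧ y' j ≤ 1},
      ⨆ i, (1 / n : ℝ) * ∑ j, |x i j - y'.1 j|) < τ + ε by rw [← hτ]; exact hτlt)
  have hdi : ∀ i, (1 / n : ℝ) * ∑ j, |x i j - y'.1 j| < τ + ε := fun i =>
    lt_of_le_of_lt (le_ciSup (f := fun i => (1 / n : ℝ) * ∑ j, |x i j - y'.1 j|)
      (Set.Finite.bddAbove (Set.finite_range _)) i) hy'
  obtain ⟨w, hwbox, hwcard, hweq⟩ := reduceA n L x hx n y'.1 y'.2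
    ((Finset.card_filter_le _ _).trans (by simp))
  obtain ⟨b, hb⟩ := roundB n L x hx w hwbox hwcard
  have hfin : ∀ i, (1 / n : ℝ) * ∑ j, |x i j - (if b j then (1:ℝ) else 0)| < τ + ε + c := by
    intro i
    have h1 := hb i
    rw [hweq i] at h1
    have hnpos : (0:ℝ) < n := by exact_mod_cast hn
    have h2 : (1 / n : ℝ) * ∑ j, |x i j - (if b j then (1:ℝ) else 0)| ≤
        (1 / n : ℝ) * (∑ j, |x i j - y'.1 j| + L / 2) :=
      mul_le_mul_of_nonneg_left h1 (by positivity)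
    have h3 : (1 / n : ℝ) * (∑ j, |x i j - y'.1 j| + L / 2) =
        (1 / n : ℝ) * ∑ j, |x i j - y'.1 j| + c := by rw [hc]; ring
    have h4 := hdi i
    linarith
  have hGlt : G b < τ + ε + c := by
    rw [hG]
    exact (Finset.sup'_lt_iff _).mpr (fun i _ => hfin i)
  have hmin := hb₀ b (mem_univ b)
  rw [hε] at hGlt
  linarith
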